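/- arXiv:1804.02240 — 3 statements merged into one kernel-verified Lean document; each statement's English description precedes it below -/
import Mathlib

section
/- Let T be a triangulated category with a t-structure (T^{≤0}, T^{≥0}). Suppose there exist an integer A and an object G of T which is a generator (Hom(ΣⁱG, u) = 0 for all i ∈ ℤ implies u = 0) such that Hom(G, T^{≤-A}) = 0. Then: (1) any object F ∈ T⁻ with Hᵉ(F) = 0 for all ℓ ∈ ℤ must be zero; (2) any morphism f : E → F in T⁻ such that Hᵉ(f) is an isomorphism for all ℓ ∈ ℤ is an isomorphism. -/
/-!
STATEMENT 3: Let T be a triangulated category with a t-structure. Suppose there exist an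
integer A and a generator G (Hom(ΣⁱG, u) = 0 for all i ∈ ℤ implies u = 0) with
Hom(G, T^{≤-A}) = 0. Then:
(1) any F ∈ T⁻ with Hᵉ(F) = 0 for all ℓ is zero;
(2) any morphism f : E → F in T⁻ with Hᵉ(f) an isomorphism for all ℓ is an isomorphism.

Truncation data and heart cohomology functors Hᵉ are packaged as in `TruncationData`.
-/

open CategoryTheory Limits Pretriangulated Triangulated

universe v u

variable {C : Type u} [Category.{v} C] [Preadditive C] [HasZeroObject C] [HasShift C ℤ]
  [∀ n : ℤ, (shiftFunctor C n).Additive] [Pretriangulated C]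

/-- Truncation data for a t-structure. -/
structure TruncationData (t : TStructure C) where
  truncLE (n : ℤ) : C ⥤ C
  truncGE (n : ℤ) : C ⥤ C
  truncLE_le (n : ℤ) (X : C) : t.le n ((truncLE n).obj X)
  truncGE_ge (n : ℤ) (X : C) : t.ge n ((truncGE n).obj X)
  ιLE (n : ℤ) : truncLE n ⟶ 𝟭 C
  πGE (n : ℤ) : 𝟭 C ⟶ truncGE n
  δ (n : ℤ) (X : C) : (truncGE (n + 1)).obj X ⟶ ((truncLE n).obj X)⟦(1 : ℤ)⟧
  triangle_mem (n : ℤ) (X : C) :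
    Triangle.mk ((ιLE n).app X) ((πGE (n + 1)).app X) (δ n X) ∈ distTriang C

/-- The ℓ-th heart cohomology functor `Hᵉ(-) = Σᵉ((-)^{≤ℓ})^{≥ℓ}`. -/
def TruncationData.H {t : TStructure C} (d : TruncationData t) (ℓ : ℤ) : C ⥤ C :=
  d.truncLE ℓ ⋙ d.truncGE ℓ ⋙ shiftFunctor C ℓ

set_option linter.unusedSectionVars false

namespace Aux


/-- generic orthogonality -/
lemma zero_of_LE_GE (t : TStructure C) {X Y : C} (f : X ⟶ Y) (n : ℤ)
    (hX : t.le n X) (hY : t.ge (n+1) Y) : f = 0 := by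
  apply (shiftFunctor C n).map_injective
  rw [Functor.map_zero]
  exact t.zero' ((shiftFunctor C n).map f)
    (t.le_shift n n 0 (add_zero n) X hX)
    (t.ge_shift (n+1) n 1 (by omega) Y hY)

/-- iso from bijectivity of Hom(U, -) for U in a class containing both objects -/
lemma isIso_of_homBij {P Q : C} (g : P ⟶ Q) (S : C → Prop) (hP : S P) (hQ : S Q)
    (h : ∀ U, S U → Function.Bijective (fun u : U ⟶ P => u ≫ g)) : IsIso g := by
  obtain ⟨ψ, hψ⟩ := (h Q hQ).2 (𝟙 Q)
  refine ⟨ψ, ?_, hψ⟩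
  apply (h P hP).1
  simp only [Category.assoc, hψ, Category.comp_id, Category.id_comp]

lemma bij_of_square {α β γ δ : Type*} {T : α → β} {L : γ → α} {R : δ → β} {B : γ → δ}
    (h : ∀ x, T (L x) = R (B x)) (hL : Function.Bijective L) (hR : Function.Bijective R)
    (hB : Function.Bijective B) : Function.Bijective T := by
  have heq : T = R ∘ B ∘ (Equiv.ofBijective L hL).symm := by
    funext a
    rw [Function.comp_apply, Function.comp_apply, ← h ((Equiv.ofBijective L hL).symm a)]
    exact congrArg T ((Equiv.ofBijective L hL).apply_symm_apply a).symm
  rw [heq]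
  exact hR.comp (hB.comp (Equiv.ofBijective L hL).symm.bijective)

lemma bij_cancel {α β γ : Type*} {T : α → β} {R : β → γ} {S : α → γ}
    (h : ∀ x, R (T x) = S x) (hR : Function.Bijective R) (hS : Function.Bijective S) :
    Function.Bijective T := by
  have : T = (Equiv.ofBijective R hR).symm ∘ S := by
    funext a
    apply hR.1
    rw [h a, Function.comp_apply]
    exact ((Equiv.ofBijective R hR).apply_symm_apply (S a)).symm
  rw [this]
  exact (Equiv.ofBijective R hR).symm.bijective.comp hS

lemma bij_comp_iso {P Q U : C} (g : P ⟶ Q) [IsIso g] :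
    Function.Bijective (fun u : U ⟶ P => u ≫ g) :=
  ⟨fun u v huv => by simpa using huv =≫ inv g,
   fun v => ⟨v ≫ inv g, by simp⟩⟩

/-- adjunction-style bijection -/
lemma adj_bij (t : TStructure C) {P V Q : C} {p : P ⟶ V} {q : V ⟶ Q} {r : Q ⟶ P⟦(1:ℤ)⟧}
    (hT : Triangle.mk p q r ∈ distTriang C) (ℓ : ℤ)
    (hQ : t.ge (ℓ+1) Q) (U : C) (hU : t.le ℓ U) :
    Function.Bijective (fun u : U ⟶ P => u ≫ p) := by
  constructor
  · intro u v huv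
    have huv' : u ≫ p = v ≫ p := huv
    have hsub : (u - v) ≫ p = 0 := by rw [Preadditive.sub_comp, huv', sub_self]
    obtain ⟨w, hw⟩ := Triangle.coyoneda_exact₂ _ (inv_rot_of_distTriang _ hT) (u - v)
      (by exact hsub)
    have hw0 : w = 0 := zero_of_LE_GE t w ℓ hU
      (t.ge_antitone (by omega) _ (t.ge_shift (ℓ+1) (-1) (ℓ+2) (by omega) Q hQ))
    have := hw
    rw [hw0, Limits.zero_comp] at this
    exact sub_eq_zero.mp this
  · intro v
    have hv : v ≫ q = 0 := zero_of_LE_GE t (v ≫ q) ℓ hU hQ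
    obtain ⟨u, hu⟩ := Triangle.coyoneda_exact₂ _ hT v hv
    exact ⟨u, hu.symm⟩


variable {t : TStructure C} (d : TruncationData t)

/-- if `X ≤ n` then `τ≥(n+1) X ≅ 0`. -/
lemma isZero_truncGE_of_LE (n : ℤ) (X : C) (hX : t.le n X) :
    IsZero ((d.truncGE (n+1)).obj X) := by
  have hT := d.triangle_mem n X
  have h2 : (d.πGE (n+1)).app X = 0 :=
    zero_of_LE_GE t _ n hX (d.truncGE_ge (n+1) X)
  rw [IsZero.iff_id_eq_zero]
  obtain ⟨e, he⟩ := Triangle.yoneda_exact₃ _ hT (𝟙 _) (by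
    show (d.πGE (n+1)).app X ≫ 𝟙 _ = 0
    rw [h2, zero_comp])
  have he0 : e = 0 := zero_of_LE_GE t e n
    (t.le_monotone (by omega) _ (t.le_shift n 1 (n-1) (by omega) _ (d.truncLE_le n X)))
    (d.truncGE_ge (n+1) X)
  have heq : 𝟙 ((d.truncGE (n+1)).obj X) = d.δ n X ≫ e := he
  rw [heq, he0]
  exact comp_zero

/-- if `X ≤ n` then `ιLE n` is an isomorphism at `X`. -/
lemma isIso_ιLE (n : ℤ) (X : C) (hX : t.le n X) : IsIso ((d.ιLE n).app X) := by
  exact (Triangle.isZero₃_iff_isIso₁ _ (d.triangle_mem n X)).1 (isZero_truncGE_of_LE d n X hX)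

/-- truncLE of ι is an isomorphism when `ℓ ≤ m` -/
lemma isIso_truncLEmap_ι (ℓ m : ℤ) (h : ℓ ≤ m) (X : C) :
    IsIso ((d.truncLE ℓ).map ((d.ιLE m).app X)) := by
  apply isIso_of_homBij _ (t.le ℓ) (d.truncLE_le ℓ _) (d.truncLE_le ℓ _)
  intro U hU
  refine bij_cancel (R := fun u : U ⟶ (d.truncLE ℓ).obj X => u ≫ (d.ιLE ℓ).app X)
    (S := fun u : U ⟶ (d.truncLE ℓ).obj ((d.truncLE m).obj X) =>
      u ≫ ((d.ιLE ℓ).app ((d.truncLE m).obj X) ≫ (d.ιLE m).app X)) ?_ ?_ ?_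
  · intro u
    have hnat := (d.ιLE ℓ).naturality ((d.ιLE m).app X)
    dsimp at hnat
    rw [Category.assoc, hnat]
  · exact adj_bij t (d.triangle_mem ℓ X) ℓ (d.truncGE_ge _ _) U hU
  · have b1 : Function.Bijective
        (fun u : U ⟶ (d.truncLE ℓ).obj ((d.truncLE m).obj X) =>
          u ≫ (d.ιLE ℓ).app ((d.truncLE m).obj X)) :=
      adj_bij t (d.triangle_mem ℓ ((d.truncLE m).obj X)) ℓ (d.truncGE_ge _ _) U hU
    have b2 : Function.Bijective
        (fun u : U ⟶ (d.truncLE m).obj X => u ≫ (d.ιLE m).app X) :=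
      adj_bij t (d.triangle_mem m X) ℓ
        (t.ge_antitone (by omega) _ (d.truncGE_ge (m+1) X)) U hU
    have := b2.comp b1
    convert this using 1
    funext u
    simp [Function.comp]
  
/-- any map between zero objects is iso -/
lemma isIso_of_isZero {P Q : C} (g : P ⟶ Q) (hP : IsZero P) (hQ : IsZero Q) : IsIso g :=
  ⟨0, hP.eq_of_src _ _, hQ.eq_of_src _ _⟩

/-- if `X ≤ m` then `τ≥(m+1) τ≤(m+1) X ≅ 0`. -/
lemma isZero_HH (m : ℤ) (X : C) (hX : t.le m X) :
    IsZero ((d.truncGE (m+1)).obj ((d.truncLE (m+1)).obj X)) := by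
  have h1 : t.le m ((d.truncLE (m+1)).obj X) := by
    have : IsIso ((d.ιLE (m+1)).app X) :=
      isIso_ιLE d (m+1) X (t.le_monotone (by omega) _ hX)
    exact (t.le m).prop_of_iso (asIso ((d.ιLE (m+1)).app X)).symm hX
  exact isZero_truncGE_of_LE d m _ h1

/-- transfer of `IsIso (τ≥ℓ τ≤ℓ f)` through a further truncation `τ≤m`, `ℓ ≤ m`. -/
lemma H_trunc_iso (ℓ m : ℤ) (h : ℓ ≤ m) {X Y : C} (f : X ⟶ Y)
    (hf : IsIso ((d.truncGE ℓ).map ((d.truncLE ℓ).map f))) :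
    IsIso ((d.truncGE ℓ).map ((d.truncLE ℓ).map ((d.truncLE m).map f))) := by
  have hX : IsIso ((d.truncLE ℓ).map ((d.ιLE m).app X)) := isIso_truncLEmap_ι d ℓ m h X
  have hY : IsIso ((d.truncLE ℓ).map ((d.ιLE m).app Y)) := isIso_truncLEmap_ι d ℓ m h Y
  have hnat : (d.truncLE ℓ).map ((d.truncLE m).map f) ≫ (d.truncLE ℓ).map ((d.ιLE m).app Y)
      = (d.truncLE ℓ).map ((d.ιLE m).app X) ≫ (d.truncLE ℓ).map f := by
    rw [← Functor.map_comp, ← Functor.map_comp]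
    congr 1
    have hnat' := (d.ιLE m).naturality f
    dsimp at hnat'
    rw [hnat']
  have heq : (d.truncLE ℓ).map ((d.truncLE m).map f)
      = (d.truncLE ℓ).map ((d.ιLE m).app X) ≫ (d.truncLE ℓ).map f
        ≫ inv ((d.truncLE ℓ).map ((d.ιLE m).app Y)) := by
    rw [← Category.assoc, ← hnat, Category.assoc, IsIso.hom_inv_id, Category.comp_id]
  rw [heq, Functor.map_comp, Functor.map_comp]
  infer_instance

/-- vanishing of maps from shifts of G into sufficiently low objects -/
lemma hom_shift_zero (A : ℤ) (G : C) (hvan : ∀ X : C, t.le (-A) X → ∀ f : G ⟶ X, f = 0)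
    (i : ℤ) (W : C) (hW : t.le (-(A+i)) W) (g : (G⟦i⟧ : C) ⟶ W) : g = 0 := by
  apply (shiftFunctor C (-i)).map_injective
  rw [Functor.map_zero]
  have hiso : IsIso (((shiftEquiv C i).unitIso.app G).hom) := inferInstance
  refine (cancel_epi (((shiftEquiv C i).unitIso.app G).hom)).1 ?_
  erw [comp_zero]
  exact hvan _ (t.le_shift (-(A+i)) (-i) (-A) (by omega) W hW) _

/-- shift transfer of bijectivity -/
lemma bij_shift (i : ℤ) (G : C) {P Q : C} (g : P ⟶ Q)
    (h : Function.Bijective (fun u : (G⟦i-1⟧ : C) ⟶ P => u ≫ g)) :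
    Function.Bijective (fun u : (G⟦i⟧ : C) ⟶ P⟦(1:ℤ)⟧ => u ≫ g⟦(1:ℤ)⟧') := by
  have e : (G⟦i⟧ : C) ≅ ((G⟦i-1⟧)⟦(1:ℤ)⟧ : C) :=
    (shiftFunctorAdd' C (i-1) 1 i (by omega)).app G
  have Φbij : ∀ (W : C), Function.Bijective
      (fun u : (G⟦i-1⟧ : C) ⟶ W => e.hom ≫ u⟦(1:ℤ)⟧') := by
    intro W
    have b1 : Function.Bijective (fun u : (G⟦i-1⟧ : C) ⟶ W => u⟦(1:ℤ)⟧') :=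
      ⟨fun u v huv => (shiftFunctor C (1:ℤ)).map_injective huv,
       fun v => (shiftFunctor C (1:ℤ)).map_surjective v⟩
    have b2 : Function.Bijective
        (fun u : ((G⟦i-1⟧)⟦(1:ℤ)⟧ : C) ⟶ W⟦(1:ℤ)⟧ => e.hom ≫ u) :=
      ⟨fun u v huv => by simpa using e.inv ≫= huv, fun v => ⟨e.inv ≫ v, by simp⟩⟩
    exact b2.comp b1
  refine bij_of_square (L := fun u : (G⟦i-1⟧ : C) ⟶ P => e.hom ≫ u⟦(1:ℤ)⟧')
    (R := fun u : (G⟦i-1⟧ : C) ⟶ Q => e.hom ≫ u⟦(1:ℤ)⟧')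
    (B := fun u : (G⟦i-1⟧ : C) ⟶ P => u ≫ g) ?_ (Φbij P) (Φbij Q) h
  intro u
  rw [Functor.map_comp, Category.assoc]

lemma bij_zero_case (A : ℤ) (G : C) (hvan : ∀ X : C, t.le (-A) X → ∀ f : G ⟶ X, f = 0)
    (i : ℤ) {X Y : C} (f : X ⟶ Y) (hX : t.le (-(A+i)) X) (hY : t.le (-(A+i)) Y) :
    Function.Bijective (fun u : (G⟦i⟧ : C) ⟶ X => u ≫ f) := by
  constructor
  · intro u v _
    rw [hom_shift_zero A G hvan i X hX u, hom_shift_zero A G hvan i X hX v]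
  · intro v
    refine ⟨0, ?_⟩
    show (0 : (G⟦i⟧ : C) ⟶ X) ≫ f = v
    rw [zero_comp, hom_shift_zero A G hvan i Y hY v]

lemma main_bij (A : ℤ) (G : C) (hvan : ∀ X : C, t.le (-A) X → ∀ f : G ⟶ X, f = 0) :
    ∀ (k : ℕ) (i n : ℤ) (X Y : C) (f : X ⟶ Y), t.le n X → t.le n Y →
      (∀ ℓ : ℤ, IsIso ((d.truncGE ℓ).map ((d.truncLE ℓ).map f))) →
      n + A + i ≤ k →
      Function.Bijective (fun u : (G⟦i⟧ : C) ⟶ X => u ≫ f) := by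
  intro k
  induction k with
  | zero =>
    intro i n X Y f hX hY _ hk
    exact bij_zero_case A G hvan i f
      (t.le_monotone (show n ≤ -(A+i) by omega) _ hX)
      (t.le_monotone (show n ≤ -(A+i) by omega) _ hY)
  | succ k ih =>
    intro i n X Y f hX hY hf hk
    by_cases hk' : n + A + i ≤ k
    · exact ih i n X Y f hX hY hf hk'
    obtain ⟨m, rfl⟩ : ∃ m, n = m + 1 := ⟨n - 1, by omega⟩
    -- truncate f
    set X' := (d.truncLE (m+1)).obj X with hX'def
    set Y' := (d.truncLE (m+1)).obj Y with hY'def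
    set f' := (d.truncLE (m+1)).map f with hf'def
    haveI hiX : IsIso ((d.ιLE (m+1)).app X) := isIso_ιLE d (m+1) X hX
    haveI hiY : IsIso ((d.ιLE (m+1)).app Y) := isIso_ιLE d (m+1) Y hY
    suffices hb : Function.Bijective (fun u : (G⟦i⟧ : C) ⟶ X' => u ≫ f') by
      refine bij_of_square (L := fun u : (G⟦i⟧ : C) ⟶ X' => u ≫ (d.ιLE (m+1)).app X)
        (R := fun u : (G⟦i⟧ : C) ⟶ Y' => u ≫ (d.ιLE (m+1)).app Y)
        (B := fun u : (G⟦i⟧ : C) ⟶ X' => u ≫ f') ?_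
        (bij_comp_iso _) (bij_comp_iso _) hb
      intro u
      have hnat := (d.ιLE (m+1)).naturality f
      dsimp at hnat
      rw [Category.assoc, Category.assoc, ← hnat]
    -- the truncation triangles of f'
    set X₁ := (d.truncLE m).obj X' with hX₁def
    set Y₁ := (d.truncLE m).obj Y' with hY₁def
    set X₂ := (d.truncGE (m+1)).obj X' with hX₂def
    set Y₂ := (d.truncGE (m+1)).obj Y' with hY₂def
    set TX := Triangle.mk ((d.ιLE m).app X') ((d.πGE (m+1)).app X') (d.δ m X') with hTXdef
    set TY := Triangle.mk ((d.ιLE m).app Y') ((d.πGE (m+1)).app Y') (d.δ m Y') with hTYdef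
    set f₁ : TX.obj₁ ⟶ TY.obj₁ := (d.truncLE m).map f' with hf₁def
    set f₂ : TX.obj₃ ⟶ TY.obj₃ := (d.truncGE (m+1)).map f' with hf₂def
    have hTX : TX ∈ distTriang C := d.triangle_mem m X'
    have hTY : TY ∈ distTriang C := d.triangle_mem m Y'
    haveI hIf₂ : IsIso f₂ := hf (m+1)
    have sq1 : TX.mor₁ ≫ f' = f₁ ≫ TY.mor₁ := ((d.ιLE m).naturality f').symm
    have sq2 : TX.mor₂ ≫ f₂ = f' ≫ TY.mor₂ := ((d.πGE (m+1)).naturality f').symm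
    -- δ-compatibility
    obtain ⟨c, hc1, hc2⟩ := complete_distinguished_triangle_morphism TX TY hTX hTY f₁ f' sq1
    have hcf₂ : c = f₂ := by
      have hsub : TX.mor₂ ≫ (c - f₂) = 0 := by
        rw [Preadditive.comp_sub, hc1, sq2]; exact sub_self _
      obtain ⟨e, he⟩ := Triangle.yoneda_exact₃ _ hTX (c - f₂) hsub
      have he0 : e = 0 := zero_of_LE_GE t e m
        (t.le_monotone (by omega) _ (t.le_shift m 1 (m-1) (by omega) _ (d.truncLE_le m X')))
        (d.truncGE_ge (m+1) Y')
      rw [he0, comp_zero] at he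
      rwa [sub_eq_zero] at he
    rw [hcf₂] at hc1 hc2
    set φ : TX ⟶ TY := Triangle.homMk _ _ f₁ f' f₂ sq1 hc1 hc2 with hφdef
    -- inductive data
    have hf₁ : ∀ ℓ : ℤ, IsIso ((d.truncGE ℓ).map ((d.truncLE ℓ).map f₁)) := by
      intro ℓ
      rcases le_or_gt ℓ m with h | h
      · exact H_trunc_iso d ℓ m h f' (H_trunc_iso d ℓ (m+1) (by omega) f (hf ℓ))
      · obtain ⟨r, rfl⟩ : ∃ r, ℓ = r + 1 := ⟨ℓ - 1, by omega⟩
        exact isIso_of_isZero _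
          (isZero_HH d r X₁ (t.le_monotone (by omega) _ (d.truncLE_le m X')))
          (isZero_HH d r Y₁ (t.le_monotone (by omega) _ (d.truncLE_le m Y')))
    have bijF₁ : Function.Bijective (fun u : (G⟦i⟧ : C) ⟶ X₁ => u ≫ f₁) :=
      ih i m X₁ Y₁ f₁ (d.truncLE_le m X') (d.truncLE_le m Y') hf₁ (by omega)
    have bijF₁' : Function.Bijective (fun u : (G⟦i-1⟧ : C) ⟶ X₁ => u ≫ f₁) :=
      ih (i-1) m X₁ Y₁ f₁ (d.truncLE_le m X') (d.truncLE_le m Y') hf₁ (by omega)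
    have bijS : Function.Bijective
        (fun u : (G⟦i⟧ : C) ⟶ X₁⟦(1:ℤ)⟧ => u ≫ f₁⟦(1:ℤ)⟧') := bij_shift i G f₁ bijF₁'
    have bijF₂ : Function.Bijective (fun u : (G⟦i⟧ : C) ⟶ X₂ => u ≫ f₂) := bij_comp_iso f₂
    constructor
    · -- injectivity
      suffices h0 : ∀ u : (G⟦i⟧ : C) ⟶ X', u ≫ f' = 0 → u = 0 by
        intro u v huv
        have huv' : u ≫ f' = v ≫ f' := huv
        have := h0 (u - v) (by rw [Preadditive.sub_comp, huv', sub_self])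
        rwa [sub_eq_zero] at this
      intro u hu
      have h1 : u ≫ TX.mor₂ = 0 := by
        apply bijF₂.1
        show (u ≫ TX.mor₂) ≫ f₂ = (0 : (G⟦i⟧:C) ⟶ TX.obj₃) ≫ f₂
        erw [Category.assoc, sq2, ← Category.assoc, hu, zero_comp, zero_comp]
      obtain ⟨u₁, hu₁⟩ := Triangle.coyoneda_exact₂ _ hTX u h1
      have h2 : (u₁ ≫ f₁) ≫ TY.mor₁ = 0 := by
        erw [Category.assoc, ← sq1, ← Category.assoc, ← hu₁, hu]
        rfl
      obtain ⟨s, hs⟩ := Triangle.coyoneda_exact₂ _ (inv_rot_of_distTriang _ hTY) (u₁ ≫ f₁) h2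
      have ψc : TX.invRotate.mor₁ ≫ f₁ = f₂⟦(-1:ℤ)⟧' ≫ TY.invRotate.mor₁ :=
        ((invRotate C).map φ).comm₁
      haveI : IsIso (f₂⟦(-1:ℤ)⟧') := inferInstance
      have hs' : u₁ ≫ f₁ = (s ≫ (inv (f₂⟦(-1:ℤ)⟧') : _)) ≫ TX.invRotate.mor₁ ≫ f₁ := by
        erw [ψc]
        exact hs.trans (by erw [Category.assoc, IsIso.inv_hom_id_assoc]; rfl)
      have hu₁' : u₁ = (s ≫ (inv (f₂⟦(-1:ℤ)⟧') : _)) ≫ TX.invRotate.mor₁ := by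
        apply bijF₁.1
        show u₁ ≫ f₁ = ((s ≫ (inv (f₂⟦(-1:ℤ)⟧') : _)) ≫ TX.invRotate.mor₁) ≫ f₁
        rw [hs']
        exact (Category.assoc _ _ _).symm
      have hz : TX.invRotate.mor₁ ≫ TX.mor₁ = 0 :=
        comp_distTriang_mor_zero₁₂ _ (inv_rot_of_distTriang _ hTX)
      erw [hu₁, hu₁', Category.assoc, hz, comp_zero]
      rfl
    · -- surjectivity
      intro v
      obtain ⟨u₂, hu₂⟩ := bijF₂.2 (v ≫ TY.mor₂)
      have hu₂' : u₂ ≫ f₂ = v ≫ TY.mor₂ := hu₂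
      have h3 : u₂ ≫ TX.mor₃ = 0 := by
        apply bijS.1
        show (u₂ ≫ TX.mor₃) ≫ f₁⟦(1:ℤ)⟧' = (0 : (G⟦i⟧:C) ⟶ (TX.obj₁⟦(1:ℤ)⟧ : C)) ≫ f₁⟦(1:ℤ)⟧'
        erw [Category.assoc, hc2, ← Category.assoc, hu₂', Category.assoc,
          comp_distTriang_mor_zero₂₃ _ hTY, comp_zero, zero_comp]
      obtain ⟨u', hu'⟩ := Triangle.coyoneda_exact₃ _ hTX u₂ h3
      have hw : (u' ≫ f' - v) ≫ TY.mor₂ = 0 := by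
        erw [Preadditive.sub_comp, Category.assoc, ← sq2, ← Category.assoc, ← hu', hu₂',
          sub_self]
      obtain ⟨s, hs⟩ := Triangle.coyoneda_exact₂ _ hTY (u' ≫ f' - v) hw
      obtain ⟨s', hs'⟩ := bijF₁.2 s
      have hs'' : s' ≫ f₁ = s := hs'
      refine ⟨u' - s' ≫ TX.mor₁, ?_⟩
      show (u' - s' ≫ TX.mor₁) ≫ f' = v
      erw [Preadditive.sub_comp, Category.assoc, sq1, ← Category.assoc, hs'']
      erw [← hs]
      abel

lemma LE_all_of_H_zero (F : C) (n : ℤ) (hn : t.le n F)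
    (hH : ∀ ℓ : ℤ, IsZero ((d.H ℓ).obj F)) : ∀ m : ℤ, t.le m F := by
  have step : ∀ r : ℤ, t.le (r+1) F → t.le r F := by
    intro r hr
    have hz : IsZero ((d.truncGE (r+1)).obj ((d.truncLE (r+1)).obj F)) := by
      have h1 : IsZero ((shiftFunctor C (r+1)).obj
          ((d.truncGE (r+1)).obj ((d.truncLE (r+1)).obj F))) := hH (r+1)
      exact IsZero.of_iso ((shiftFunctor C (-(r+1))).map_isZero h1)
        ((shiftEquiv C (r+1)).unitIso.app _)
    haveI hiso : IsIso ((d.ιLE r).app ((d.truncLE (r+1)).obj F)) :=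
      (Triangle.isZero₃_iff_isIso₁ _ (d.triangle_mem r ((d.truncLE (r+1)).obj F))).1 hz
    have hmem : t.le r ((d.truncLE (r+1)).obj F) :=
      (t.le r).prop_of_iso (asIso ((d.ιLE r).app ((d.truncLE (r+1)).obj F)))
        (d.truncLE_le r _)
    haveI hiso2 : IsIso ((d.ιLE (r+1)).app F) := isIso_ιLE d (r+1) F hr
    exact (t.le r).prop_of_iso (asIso ((d.ιLE (r+1)).app F)) hmem
  have hdesc : ∀ j : ℕ, t.le (n - j) F := by
    intro j
    induction j with
    | zero => simpa using hn
    | succ j hj =>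
      have e : n - (j:ℤ) = (n - ((j:ℕ)+1:ℕ)) + 1 := by push_cast; ring
      rw [e] at hj
      exact step _ hj
  intro m
  exact t.le_monotone (show n - ((n-m).toNat : ℤ) ≤ m by omega) _ (hdesc (n-m).toNat)

end Aux

theorem isZero_of_heart_cohomology_zero_and_isIso_of_heart_cohomology_isIso
    (t : TStructure C) (d : TruncationData t) (A : ℤ) (G : C)
    (hgen : ∀ u : C, (∀ i : ℤ, ∀ f : (G⟦i⟧ : C) ⟶ u, f = 0) → IsZero u)
    (hvan : ∀ X : C, t.le (-A) X → ∀ f : G ⟶ X, f = 0) :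
    (∀ F : C, (∃ n : ℤ, t.le n F) → (∀ ℓ : ℤ, IsZero ((d.H ℓ).obj F)) → IsZero F) ∧
    (∀ (E F : C) (f : E ⟶ F), (∃ n : ℤ, t.le n E) → (∃ n : ℤ, t.le n F) →
      (∀ ℓ : ℤ, IsIso ((d.H ℓ).map f)) → IsIso f) := by
  constructor
  · intro F hF hH
    obtain ⟨n, hn⟩ := hF
    have hall := Aux.LE_all_of_H_zero d F n hn hH
    exact hgen F (fun i g => Aux.hom_shift_zero A G hvan i F (hall _) g)
  · intro E F f hE hF hH
    obtain ⟨nE, hEn⟩ := hE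
    obtain ⟨nF, hFn⟩ := hF
    have hE' : t.le (max nE nF) E := t.le_monotone (le_max_left _ _) _ hEn
    have hF' : t.le (max nE nF) F := t.le_monotone (le_max_right _ _) _ hFn
    have hf : ∀ ℓ : ℤ, IsIso ((d.truncGE ℓ).map ((d.truncLE ℓ).map f)) := by
      intro ℓ
      haveI : IsIso ((shiftFunctor C ℓ).map ((d.truncGE ℓ).map ((d.truncLE ℓ).map f))) :=
        hH ℓ
      exact isIso_of_reflects_iso _ (shiftFunctor C ℓ)
    have bij : ∀ i : ℤ, Function.Bijective (fun u : (G⟦i⟧ : C) ⟶ E => u ≫ f) := fun i =>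
      Aux.main_bij d A G hvan (max nE nF + A + i).toNat i (max nE nF) E F f hE' hF' hf
        (by omega)
    obtain ⟨Z, gZ, hZmor, hT⟩ := distinguished_cocone_triangle f
    have hZ : IsZero Z := by
      apply hgen Z
      intro i w
      have h1 : w ≫ hZmor = 0 := by
        apply (Aux.bij_shift i G f (bij (i-1))).1
        show (w ≫ hZmor) ≫ f⟦(1:ℤ)⟧' = (0 : (G⟦i⟧ : C) ⟶ (E⟦(1:ℤ)⟧ : C)) ≫ f⟦(1:ℤ)⟧'
        have hc : hZmor ≫ f⟦(1:ℤ)⟧' = 0 := comp_distTriang_mor_zero₃₁ _ hT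
        rw [Category.assoc, hc, comp_zero, zero_comp]
      obtain ⟨v, hv⟩ := Triangle.coyoneda_exact₃ _ hT w h1
      obtain ⟨u, hu⟩ := (bij i).2 v
      have hu' : u ≫ f = v := hu
      have hfg : f ≫ gZ = 0 := comp_distTriang_mor_zero₁₂ _ hT
      have hv' : w = v ≫ gZ := hv
      erw [hv', ← hu', Category.assoc, hfg, comp_zero]
    exact (Triangle.isZero₃_iff_isIso₁ _ hT).1 hZ
end

section
/- Let R be a commutative ring, let A ⊆ B be R-linear categories, and let H, H' : B^op → Mod R be R-linear functors. If H admits an A-approximating system, then restriction to the subcategory A ⊆ B induces a bijection Hom(H, H') → Hom(H|_A, H'|_A). -/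
/-!
STATEMENT 13: Let R be a commutative ring, A ⊆ B R-linear categories, and
H, H' : Bᵒᵖ → Mod R R-linear functors. If H admits an A-approximating system (a sequence
E₁ → E₂ → ⋯ in A, with a cofinal subsequence in A ∩ B = A, together with an isomorphism
colim Hom(−, Eᵢ) ≅ H), then restriction to A induces a bijection
Hom(H, H') → Hom(H|_A, H'|_A).
(R-linearity of a functor K : Bᵒᵖ ⥤ Mod R is expressed by K.map (r • f).op = r • K.map f.op.)
-/

open CategoryTheory Limits Opposite

universe v u

theorem restriction_bijective_of_approximating_system
    (R : Type v) [CommRing R] {B : Type u} [Category.{v} B] [Preadditive B] [Linear R B]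
    (A : Set B)
    (H H' : Bᵒᵖ ⥤ ModuleCat.{v} R) [H.Additive] [H'.Additive]
    (hHlin : ∀ (X Y : B) (f : X ⟶ Y) (r : R), H.map (r • f).op = r • H.map f.op)
    (hH'lin : ∀ (X Y : B) (f : X ⟶ Y) (r : R), H'.map (r • f).op = r • H'.map f.op)
    -- an A-approximating system for H:
    (E : ℕ → B) (e : ∀ i, E i ⟶ E (i + 1)) (hE : ∀ i, E i ∈ A)
    (iso : colimit (Functor.ofSequence (fun i => (linearYoneda R B).map (e i))) ≅ H) :
    Function.Bijective
      (fun φ : H ⟶ H' => Functor.whiskerLeft (ObjectProperty.ι (· ∈ A)).op φ) := by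
  set F := Functor.ofSequence (fun i => (linearYoneda R B).map (e i)) with hF
  have natl : ∀ {C : Type u} [Category.{v} C] {K K' : C ⥤ ModuleCat.{v} R} (φ : K ⟶ K')
      {X Y : C} (g : X ⟶ Y) (z : K.obj X),
      φ.app Y (K.map g z) = K'.map g (φ.app X z) := by
    intro C _ K K' φ X Y g z
    have := congrArg (fun (m : K.obj X ⟶ K'.obj Y) => m z) (φ.naturality g)
    simp only [comp_apply] at this
    exact this
  have inv_hom : ∀ (X : Bᵒᵖ) (w : H.obj X), iso.hom.app X (iso.inv.app X w) = w := by
    intro X w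
    have := congrArg (fun (m : H.obj X ⟶ H.obj X) => m w) (iso.inv_hom_id_app X)
    simp only [comp_apply, NatTrans.id_app, ModuleCat.id_apply] at this
    exact this
  have hom_inv : ∀ (X : Bᵒᵖ) (w : (colimit F).obj X),
      iso.inv.app X (iso.hom.app X w) = w := by
    intro X w
    have := congrArg (fun (m : (colimit F).obj X ⟶ (colimit F).obj X) => m w)
      (iso.hom_inv_id_app X)
    simp only [comp_apply, NatTrans.id_app, ModuleCat.id_apply] at this
    exact this
  set y : ∀ j, H.obj (op (E j)) := fun j =>
    iso.hom.app (op (E j)) ((colimit.ι F j).app (op (E j)) (𝟙 (E j))) with hy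
  have hι : ∀ (j : ℕ) (X : B) (f : X ⟶ E j),
      (colimit.ι F j).app (op X) f
        = (colimit F).map f.op ((colimit.ι F j).app (op (E j)) (𝟙 (E j))) := by
    intro j X f
    have h2 : (F.obj j).map f.op (𝟙 (E j)) = f := by
      show f ≫ 𝟙 (E j) = f
      simp
    have := natl (K := F.obj j) (K' := colimit F) (colimit.ι F j)
      (X := op (E j)) (Y := op X) f.op (𝟙 (E j))
    rw [h2] at this
    exact this
  have key : ∀ (X : B) (z : H.obj (op X)), ∃ (j : ℕ) (f : X ⟶ E j),
      z = H.map f.op (y j) := by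
    intro X z
    have : PreservesFilteredColimitsOfSize.{0, 0} (forget (ModuleCat.{v} R)) :=
      preservesFilteredColimitsOfSize_shrink _
    obtain ⟨j, f0, hf⟩ := Concrete.isColimit_exists_rep (F ⋙ (evaluation _ _).obj (op X))
      (isColimitOfPreserves ((evaluation _ _).obj (op X)) (colimit.isColimit F))
      (iso.inv.app (op X) z)
    let f : X ⟶ E j := f0
    refine ⟨j, f, ?_⟩
    have hz : iso.hom.app (op X) (iso.inv.app (op X) z) = z := inv_hom _ z
    have hD : ((((evaluation Bᵒᵖ (ModuleCat.{v} R)).obj (op X)).mapCocone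
        (colimit.cocone F)).ι.app j) = (colimit.ι F j).app (op X) := rfl
    rw [hD] at hf
    have h3 : (colimit.ι F j).app (op X) f = iso.inv.app (op X) z := hf
    rw [hι j X f] at h3
    have h4 := congrArg (iso.hom.app (op X)) h3
    rw [hz] at h4
    rw [← h4, natl iso.hom f.op]
  have hy_rel : ∀ j, H.map (e j).op (y (j + 1)) = y j := by
    intro j
    have hm : (F.map (homOfLE (j.le_add_right 1))).app (op (E j)) (𝟙 (E j)) = e j := by
      have hFm : F.map (homOfLE (j.le_add_right 1)) = (linearYoneda R B).map (e j) :=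
        Functor.ofSequence_map_homOfLE_succ _ j
      rw [hFm]
      show 𝟙 (E j) ≫ e j = e j
      simp
    have h1 : (colimit.ι F j).app (op (E j)) (𝟙 (E j))
        = (colimit.ι F (j + 1)).app (op (E j)) (e j) := by
      rw [← hm, ← colimit.w F (homOfLE (j.le_add_right 1))]
      rfl
    have h2 := congrArg (iso.hom.app (op (E j)))
      (h1.trans (hι (j + 1) (E j) (e j)))
    rw [natl iso.hom (e j).op] at h2
    simp only [hy] at h2 ⊢
    exact h2.symm
  constructor
  · -- injectivity
    intro φ ψ h
    ext X z
    obtain ⟨X⟩ := X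
    obtain ⟨j, f, rfl⟩ := key X z
    rw [natl φ f.op, natl ψ f.op]
    congr 1
    exact congrArg (fun (m : (ObjectProperty.ι (· ∈ A)).op ⋙ H ⟶
        (ObjectProperty.ι (· ∈ A)).op ⋙ H') =>
      m.app (op (⟨E j, hE j⟩ : ObjectProperty.FullSubcategory (· ∈ A))) (y j)) h
  · -- surjectivity
    intro ψ
    set u : ∀ j, H'.obj (op (E j)) := fun j =>
      ψ.app (op (⟨E j, hE j⟩ : ObjectProperty.FullSubcategory (· ∈ A))) (y j) with hu
    have hu_rel : ∀ j, H'.map (e j).op (u (j + 1)) = u j := by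
      intro j
      have := natl ψ (X := op (⟨E (j+1), hE (j+1)⟩ : ObjectProperty.FullSubcategory (· ∈ A)))
        (Y := op (⟨E j, hE j⟩ : ObjectProperty.FullSubcategory (· ∈ A)))
        ((ObjectProperty.homMk (e j) : (⟨E j, hE j⟩ : ObjectProperty.FullSubcategory (· ∈ A)) ⟶ ⟨E (j+1), hE (j+1)⟩)).op
        (y (j + 1))
      have this' : ψ.app (op (⟨E j, hE j⟩ : ObjectProperty.FullSubcategory (· ∈ A)))
            (H.map (e j).op (y (j + 1)))
          = H'.map (e j).op (ψ.app (op (⟨E (j+1), hE (j+1)⟩ :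
              ObjectProperty.FullSubcategory (· ∈ A))) (y (j + 1))) := this
      rw [hy_rel j] at this'
      exact this'.symm
    -- the natural transformations F.obj j ⟶ H'
    let t : ∀ j, F.obj j ⟶ H' := fun j =>
      { app := fun X => ModuleCat.ofHom
          { toFun := fun (f : X.unop ⟶ E j) => H'.map f.op (u j)
            map_add' := by
              intro f g
              show H'.map (f + g).op (u j) = H'.map f.op (u j) + H'.map g.op (u j)
              have hop : (f + g).op = f.op + g.op := rfl
              rw [hop, H'.map_add]
              rfl
            map_smul' := by
              intro r f
              show H'.map (r • f).op (u j) = r • H'.map f.op (u j)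
              rw [hH'lin X.unop (E j) f r]
              rfl }
        naturality := by
          intro X Y g
          ext f
          show H'.map (g.unop ≫ f).op (u j) = H'.map g (H'.map f.op (u j))
          have : (g.unop ≫ f).op = f.op ≫ g := rfl
          rw [this, H'.map_comp]
          rfl }
    have ht : ∀ j (X : Bᵒᵖ) (f : (F.obj j).obj X),
        (t j).app X f = H'.map (f : X.unop ⟶ E j).op (u j) := fun _ _ _ => rfl
    -- cocone over F with apex H'
    let c : Cocone F := Cocone.mk H' <| NatTrans.ofSequence
      (F := F) (G := (Functor.const ℕ).obj H') t <| by
        intro n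
        ext X f
        show (t (n + 1)).app X ((F.map (homOfLE (n.le_add_right 1))).app X f)
          = H'.map ((f : X.unop ⟶ E n)).op (u n)
        have hFm : F.map (homOfLE (n.le_add_right 1)) = (linearYoneda R B).map (e n) :=
          Functor.ofSequence_map_homOfLE_succ _ n
        rw [hFm]
        show H'.map ((f : X.unop ⟶ E n) ≫ e n).op (u (n + 1)) = H'.map f.op (u n)
        have : ((f : X.unop ⟶ E n) ≫ e n).op = (e n).op ≫ f.op := rfl
        rw [this, H'.map_comp, ← hu_rel n]
        rfl
    refine ⟨iso.inv ≫ colimit.desc F c, ?_⟩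
    ext X z
    obtain ⟨X⟩ := X
    obtain ⟨j, f, rfl⟩ := key X.obj z
    show (colimit.desc F c).app (op X.obj) (iso.inv.app (op X.obj) (H.map f.op (y j)))
      = ψ.app (op X) (H.map f.op (y j))
    -- compute the left side
    have h5 : iso.inv.app (op X.obj) (H.map f.op (y j))
        = (colimit.ι F j).app (op X.obj) f := by
      rw [natl iso.inv f.op, hι j X.obj f]
      congr 1
      simp only [hy]
      exact hom_inv _ _
    rw [h5]
    have h6 : (colimit.desc F c).app (op X.obj) ((colimit.ι F j).app (op X.obj) f)
        = (t j).app (op X.obj) f := by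
      have h7 := congrArg (fun (m : F.obj j ⟶ H') => m.app (op X.obj) f)
        (colimit.ι_desc c j)
      exact h7
    rw [h6]
    refine (ht j (op X.obj) f).trans ?_
    -- right side via naturality of ψ
    have := natl ψ (X := op (⟨E j, hE j⟩ : ObjectProperty.FullSubcategory (· ∈ A))) (Y := op X)
      ((ObjectProperty.homMk f : X ⟶ ⟨E j, hE j⟩)).op (y j)
    exact this.symm
end

section
/- Let L : U → S be a triangulated functor with right adjoint R : S → U. Suppose P is a class of objects of U with P = ΣP such that: (1) if u ∈ U and Hom(p, u) = 0 for all p ∈ P, then u = 0; (2) if s ∈ S and Hom(L(p), s) = 0 for all p ∈ P, then s = 0; (3) for every p ∈ P and u ∈ U the map Hom(p, u) → Hom(L(p), L(u)) induced by L is an isomorphism. Then L and R are mutually quasi-inverse equivalences of categories. -/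
/-!
STATEMENT 19: Let L : U → S be a triangulated functor with right adjoint R : S → U, and
P a class of objects of U with ΣP = P such that (1) P^⊥ = 0 in U, (2) L(P)^⊥ = 0 in S,
(3) L is fully faithful on maps out of P: Hom(p, u) → Hom(L p, L u) is bijective for all
p ∈ P, u ∈ U. Then L and R are mutually quasi-inverse equivalences, i.e. the unit and
counit of the adjunction are isomorphisms.
-/

open CategoryTheory Limits Pretriangulated

universe v₁ u₁ v₂ u₂

theorem quasi_inverse_of_generating_class
    {U : Type u₁} [Category.{v₁} U] [Preadditive U] [HasZeroObject U] [HasShift U ℤ]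
    [∀ n : ℤ, (shiftFunctor U n).Additive] [Pretriangulated U]
    {S : Type u₂} [Category.{v₂} S] [Preadditive S] [HasZeroObject S] [HasShift S ℤ]
    [∀ n : ℤ, (shiftFunctor S n).Additive] [Pretriangulated S]
    (L : U ⥤ S) [L.CommShift ℤ] [L.IsTriangulated]
    (R : S ⥤ U) (adj : L ⊣ R)
    (P : Set U) (hP : ∀ X : U, X ∈ P ↔ (X⟦(1 : ℤ)⟧ : U) ∈ P)
    (h1 : ∀ u : U, (∀ p ∈ P, ∀ f : p ⟶ u, f = 0) → IsZero u)
    (h2 : ∀ s : S, (∀ p ∈ P, ∀ f : L.obj p ⟶ s, f = 0) → IsZero s)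
    (h3 : ∀ p ∈ P, ∀ u : U, Function.Bijective (fun f : p ⟶ u => L.map f)) :
    IsIso adj.unit ∧ IsIso adj.counit := by
  -- Composition with the unit is bijective on Hom(p, -) for p ∈ P.
  have hunit : ∀ p ∈ P, ∀ u : U,
      Function.Bijective (fun a : p ⟶ u => a ≫ adj.unit.app u) := by
    intro p hp u
    have heq : (fun a : p ⟶ u => a ≫ adj.unit.app u)
        = (adj.homEquiv p (L.obj u)) ∘ (fun a : p ⟶ u => L.map a) := by
      funext a
      simp only [Function.comp_apply, Adjunction.homEquiv_unit]
      have := adj.unit.naturality a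
      dsimp at this ⊢
      rw [← this]
    rw [heq]
    exact (adj.homEquiv p (L.obj u)).bijective.comp (h3 p hp u)
  -- Key cancellation for shifted unit.
  have key1 : ∀ p ∈ P, ∀ (u : U) (g : p ⟶ (u⟦(1 : ℤ)⟧ : U)),
      g ≫ (adj.unit.app u)⟦(1 : ℤ)⟧' = 0 → g = 0 := by
    intro p hp u g hg
    have hnat : L.map ((adj.unit.app u)⟦(1 : ℤ)⟧') ≫
          (L.commShiftIso (1 : ℤ)).hom.app (R.obj (L.obj u))
        = (L.commShiftIso (1 : ℤ)).hom.app u ≫ (L.map (adj.unit.app u))⟦(1 : ℤ)⟧' :=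
      (L.commShiftIso (1 : ℤ)).hom.naturality (adj.unit.app u)
    have h0 : L.map g ≫ (L.commShiftIso (1 : ℤ)).hom.app u = 0 := by
      have hz : L.map g ≫ L.map ((adj.unit.app u)⟦(1 : ℤ)⟧') = 0 := by
        rw [← L.map_comp, hg, L.map_zero]
      calc L.map g ≫ (L.commShiftIso (1 : ℤ)).hom.app u
          = L.map g ≫ (L.commShiftIso (1 : ℤ)).hom.app u ≫
              (L.map (adj.unit.app u))⟦(1 : ℤ)⟧' ≫
              (adj.counit.app (L.obj u))⟦(1 : ℤ)⟧' := by
            rw [← Functor.map_comp, adj.left_triangle_components,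
              CategoryTheory.Functor.map_id]
            simp
        _ = (L.map g ≫ L.map ((adj.unit.app u)⟦(1 : ℤ)⟧')) ≫
              (L.commShiftIso (1 : ℤ)).hom.app (R.obj (L.obj u)) ≫
              (adj.counit.app (L.obj u))⟦(1 : ℤ)⟧' := by
            conv_rhs => rw [Category.assoc,
              ← Category.assoc (L.map ((adj.unit.app u)⟦(1 : ℤ)⟧')), hnat]
            simp only [Category.assoc]
        _ = 0 := by rw [hz, zero_comp]
    have hLg : L.map g = 0 := by
      rw [← cancel_mono ((L.commShiftIso (1 : ℤ)).hom.app u), zero_comp]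
      exact h0
    exact (h3 p hp (u⟦(1 : ℤ)⟧)).injective (by rw [hLg, L.map_zero])
  -- The unit is an isomorphism objectwise.
  have hu : ∀ u : U, IsIso (adj.unit.app u) := by
    intro u
    obtain ⟨Z, g, h, hT⟩ := distinguished_cocone_triangle (adj.unit.app u)
    have hZ : IsZero Z := by
      apply h1
      intro p hp q
      have hb : q ≫ h = 0 := by
        apply key1 p hp u
        rw [Category.assoc]
        have := comp_distTriang_mor_zero₃₁ _ hT
        simp only [Triangle.mk_mor₃, Triangle.mk_mor₁] at this
        exact (congrArg (q ≫ ·) this).trans comp_zero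
      obtain ⟨r, hr⟩ := Triangle.coyoneda_exact₃ _ hT q hb
      obtain ⟨a, ha⟩ := (hunit p hp u).surjective r
      dsimp at ha hr
      simp only [Triangle.mk_mor₂] at hr
      have h12 := comp_distTriang_mor_zero₁₂ _ hT
      simp only [Triangle.mk_mor₁, Triangle.mk_mor₂] at h12
      rw [hr, ← ha]
      exact (Category.assoc _ _ _).trans ((congrArg (a ≫ ·) h12).trans comp_zero)
    exact (Triangle.isZero₃_iff_isIso₁ _ hT).1 hZ
  haveI : ∀ u : U, IsIso (adj.unit.app u) := hu
  have hUnitIso : IsIso adj.unit := NatIso.isIso_of_isIso_app adj.unit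
  -- R applied to the counit is an isomorphism.
  have hRε : ∀ s : S, IsIso (R.map (adj.counit.app s)) := by
    intro s
    have w : adj.unit.app (R.obj s) ≫ R.map (adj.counit.app s) = 𝟙 _ :=
      adj.right_triangle_components s
    have : IsIso (adj.unit.app (R.obj s) ≫ R.map (adj.counit.app s)) := by
      rw [w]; infer_instance
    exact IsIso.of_isIso_comp_left (adj.unit.app (R.obj s)) _
  -- Composition with the counit is bijective on Hom(L x, -) for every x.
  have hcounit : ∀ (x : U) (s : S),
      Function.Bijective
        (fun f : L.obj x ⟶ L.obj (R.obj s) => f ≫ adj.counit.app s) := by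
    intro x s
    haveI := hRε s
    have heq : (fun f : L.obj x ⟶ L.obj (R.obj s) => f ≫ adj.counit.app s)
        = (adj.homEquiv x s).symm ∘ (asIso (R.map (adj.counit.app s))).homToEquiv ∘
            (adj.homEquiv x (L.obj (R.obj s))) := by
      funext f
      apply (adj.homEquiv x s).injective
      simp only [Function.comp_apply, Equiv.apply_symm_apply]
      simp [Adjunction.homEquiv_unit, Iso.homToEquiv]
    rw [heq]
    exact ((adj.homEquiv x s).symm.bijective.comp
      ((asIso (R.map (adj.counit.app s))).homToEquiv.bijective.comp
        (adj.homEquiv x (L.obj (R.obj s))).bijective))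
  -- Key cancellation for shifted counit.
  have key2 : ∀ (x : U) (s : S) (g : L.obj x ⟶ ((L.obj (R.obj s))⟦(1 : ℤ)⟧ : S)),
      g ≫ (adj.counit.app s)⟦(1 : ℤ)⟧' = 0 → g = 0 := by
    intro x s g hg
    set i := shiftFunctorCompIsoId S (1 : ℤ) (-1 : ℤ) (by omega) with hi
    have hnat : ((adj.counit.app s)⟦(1 : ℤ)⟧')⟦(-1 : ℤ)⟧' ≫ i.hom.app s
        = i.hom.app (L.obj (R.obj s)) ≫ adj.counit.app s := i.hom.naturality (adj.counit.app s)
    have hstep : g⟦(-1 : ℤ)⟧' ≫ i.hom.app (L.obj (R.obj s)) ≫ adj.counit.app s = 0 := by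
      rw [← hnat, ← Category.assoc, ← Functor.map_comp, hg, Functor.map_zero, zero_comp]
    set c := (L.commShiftIso (-1 : ℤ)).hom.app x ≫ g⟦(-1 : ℤ)⟧' ≫
      i.hom.app (L.obj (R.obj s)) with hc
    have hc0 : c = 0 := by
      apply (hcounit (x⟦(-1 : ℤ)⟧) s).injective
      show c ≫ adj.counit.app s = (0 : L.obj (x⟦(-1 : ℤ)⟧) ⟶ L.obj (R.obj s)) ≫ adj.counit.app s
      rw [hc, zero_comp, Category.assoc, Category.assoc, hstep, comp_zero]
    have hshift : g⟦(-1 : ℤ)⟧' = 0 := by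
      have : g⟦(-1 : ℤ)⟧' ≫ i.hom.app (L.obj (R.obj s)) = 0 := by
        rw [← cancel_epi ((L.commShiftIso (-1 : ℤ)).hom.app x), comp_zero, ← Category.assoc]
        rw [Category.assoc]
        exact hc0
      rw [← cancel_mono (i.hom.app (L.obj (R.obj s))), zero_comp]
      exact this
    rwa [Functor.map_eq_zero_iff] at hshift
  -- The counit is an isomorphism objectwise.
  have hc : ∀ s : S, IsIso (adj.counit.app s) := by
    intro s
    obtain ⟨Z, g, h, hT⟩ := distinguished_cocone_triangle (adj.counit.app s)
    have hZ : IsZero Z := by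
      apply h2
      intro p hp q
      have hb : q ≫ h = 0 := by
        apply key2 p s
        rw [Category.assoc]
        have := comp_distTriang_mor_zero₃₁ _ hT
        simp only [Triangle.mk_mor₃, Triangle.mk_mor₁] at this
        exact (congrArg (q ≫ ·) this).trans comp_zero
      obtain ⟨r, hr⟩ := Triangle.coyoneda_exact₃ _ hT q hb
      obtain ⟨a, ha⟩ := (hcounit p s).surjective r
      dsimp at ha hr
      simp only [Triangle.mk_mor₂] at hr
      have h12 := comp_distTriang_mor_zero₁₂ _ hT
      simp only [Triangle.mk_mor₁, Triangle.mk_mor₂] at h12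
      rw [hr, ← ha]
      exact (Category.assoc _ _ _).trans ((congrArg (a ≫ ·) h12).trans comp_zero)
    exact (Triangle.isZero₃_iff_isIso₁ _ hT).1 hZ
  haveI : ∀ s : S, IsIso (adj.counit.app s) := hc
  exact ⟨hUnitIso, NatIso.isIso_of_isIso_app adj.counit⟩
end
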